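/- Fix w ∈ ℂ^{N_r} with ‖w‖ = 1, matrices A_1,…,A_I ∈ ℂ^{N_r×N_t} and nonzero scalars α_1^T,…,α_I^T ∈ ℂ (targets), matrices C_1,…,C_J ∈ ℂ^{N_r×N_t} and scalars α_1^C,…,α_J^C ∈ ℂ (clutter), σ_r > 0, N₀ > 0, P_max > 0, channels h_1,…,h_K ∈ ℂ^{N_t} and thresholds Γ_1,…,Γ_K ≥ 0. Define, for u = (u_1,…,u_K) ∈ (ℂ^{N_t})^K, SCNR_i(u) = (∑_k |α_i^T|²·|w^H A_i u_k|²) / (∑_j ∑_k |α_j^C|²·|w^H C_j u_k|² + σ_r), SINR_k(u) = |h_k^H u_k|² / (∑_{i≠k} |h_k^H u_i|² + N₀), and call u feasible if SINR_k(u) ≥ Γ_k for all k and ∑_k ‖u_k‖² ≤ P_max. If u* is feasible, min_i SCNR_i(u*) > 0, and u* maximizes min_i SCNR_i over all feasible u, then ∑_k ‖u_k*‖² = P_max. -/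

import Mathlib

open Matrix Finset

set_option maxHeartbeats 1000000

/-- The radar SCNR for target direction `i`, given receive beamformer `w`, target
steering matrices `A i` with gains `αT i`, clutter matrices `C j` with gains `αC j`,
noise power `σr`, evaluated at transmit beamformers `u = (u_1,…,u_K)`. -/
noncomputable def SCNR {Nr Nt I J K : ℕ} (w : Fin Nr → ℂ)
    (A : Fin I → Matrix (Fin Nr) (Fin Nt) ℂ) (αT : Fin I → ℂ)
    (C : Fin J → Matrix (Fin Nr) (Fin Nt) ℂ) (αC : Fin J → ℂ) (σr : ℝ)
    (i : Fin I) (u : Fin K → Fin Nt → ℂ) : ℝ :=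
  (∑ k, ‖αT i‖ ^ 2 * ‖star w ⬝ᵥ (A i).mulVec (u k)‖ ^ 2) /
    ((∑ j, ∑ k, ‖αC j‖ ^ 2 * ‖star w ⬝ᵥ (C j).mulVec (u k)‖ ^ 2) + σr)

/-- The received SINR of communication user `k` with channel `h k` and noise power `N₀`,
evaluated at transmit beamformers `u`. -/
noncomputable def SINR {Nt K : ℕ} (h : Fin K → Fin Nt → ℂ) (N₀ : ℝ)
    (k : Fin K) (u : Fin K → Fin Nt → ℂ) : ℝ :=
  ‖star (h k) ⬝ᵥ u k‖ ^ 2 / ((∑ i ∈ Finset.univ.erase k, ‖star (h k) ⬝ᵥ u i‖ ^ 2) + N₀)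

/-- `u` is feasible: all SINR constraints hold and the total power `∑ₖ ‖uₖ‖²` is within
the budget `Pmax`. -/
noncomputable def Feasible {Nt K : ℕ} (h : Fin K → Fin Nt → ℂ) (N₀ : ℝ) (Γ : Fin K → ℝ)
    (Pmax : ℝ) (u : Fin K → Fin Nt → ℂ) : Prop :=
  (∀ k, SINR h N₀ k u ≥ Γ k) ∧ (∑ k, ∑ t, ‖u k t‖ ^ 2) ≤ Pmax


lemma scale_dot {n : ℕ} (v x : Fin n → ℂ) (c : ℝ) :
    star v ⬝ᵥ (fun t => (c:ℂ) * x t) = (c:ℂ) * (star v ⬝ᵥ x) := by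
  simp only [dotProduct, Finset.mul_sum, Pi.star_apply]
  exact Finset.sum_congr rfl fun t _ => by ring

lemma scale_mulVec_dot {m n : ℕ} (v : Fin m → ℂ) (M : Matrix (Fin m) (Fin n) ℂ)
    (x : Fin n → ℂ) (c : ℝ) :
    star v ⬝ᵥ M.mulVec (fun t => (c:ℂ) * x t) = (c:ℂ) * (star v ⬝ᵥ M.mulVec x) := by
  have : (fun t => (c:ℂ) * x t) = (c:ℂ) • x := rfl
  rw [this, Matrix.mulVec_smul, dotProduct_smul, smul_eq_mul]

lemma norm_scale_sq (c : ℝ) (hc : 0 ≤ c) (z : ℂ) :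
    ‖(c:ℂ) * z‖ ^ 2 = c ^ 2 * ‖z‖ ^ 2 := by
  rw [norm_mul, Complex.norm_real, Real.norm_eq_abs, abs_of_nonneg hc, mul_pow]

lemma frac_mono (a b σ c : ℝ) (ha : 0 ≤ a) (hb : 0 ≤ b) (hσ : 0 < σ) (hc : 1 ≤ c) :
    a / (b + σ) ≤ c * a / (c * b + σ) := by
  have hc0 : 0 < c := lt_of_lt_of_le one_pos hc
  rw [div_le_div_iff₀ (by positivity) (by positivity)]
  nlinarith [mul_nonneg (mul_nonneg ha hσ.le) (sub_nonneg.mpr hc)]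

lemma frac_strict (a b σ c : ℝ) (ha : 0 < a) (hb : 0 ≤ b) (hσ : 0 < σ) (hc : 1 < c) :
    a / (b + σ) < c * a / (c * b + σ) := by
  have hc0 : 0 < c := lt_trans one_pos hc
  rw [div_lt_div_iff₀ (by positivity) (by positivity)]
  nlinarith [mul_pos (mul_pos ha hσ) (sub_pos.mpr hc)]

/-- Lemma 1 of the paper: any optimizer of the max–min SCNR problem (over feasible
transmit beamformers) with positive optimal value uses the full power budget. -/
theorem power_constraint_tight {Nr Nt I J K : ℕ} (hI : 0 < I)
    (w : Fin Nr → ℂ) (hw : Real.sqrt (∑ m, ‖w m‖ ^ 2) = 1)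
    (A : Fin I → Matrix (Fin Nr) (Fin Nt) ℂ) (αT : Fin I → ℂ) (hαT : ∀ i, αT i ≠ 0)
    (C : Fin J → Matrix (Fin Nr) (Fin Nt) ℂ) (αC : Fin J → ℂ)
    (σr N₀ Pmax : ℝ) (hσr : 0 < σr) (hN₀ : 0 < N₀) (hP : 0 < Pmax)
    (h : Fin K → Fin Nt → ℂ) (Γ : Fin K → ℝ) (hΓ : ∀ k, 0 ≤ Γ k)
    (ustar : Fin K → Fin Nt → ℂ)
    (hfeas : Feasible h N₀ Γ Pmax ustar)
    (hpos : 0 < (Finset.univ.inf' (Finset.univ_nonempty_iff.mpr (Fin.pos_iff_nonempty.mp hI))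
      fun i => SCNR w A αT C αC σr i ustar))
    (hopt : ∀ u : Fin K → Fin Nt → ℂ, Feasible h N₀ Γ Pmax u →
      (Finset.univ.inf' (Finset.univ_nonempty_iff.mpr (Fin.pos_iff_nonempty.mp hI))
        fun i => SCNR w A αT C αC σr i u) ≤
      (Finset.univ.inf' (Finset.univ_nonempty_iff.mpr (Fin.pos_iff_nonempty.mp hI))
        fun i => SCNR w A αT C αC σr i ustar)) :
    (∑ k, ∑ t, ‖ustar k t‖ ^ 2) = Pmax := by
  
  classical
  by_contra hne
  obtain ⟨hsinr, hpow⟩ := hfeas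
  set S := ∑ k, ∑ t, ‖ustar k t‖ ^ 2 with hS
  have hSlt : S < Pmax := lt_of_le_of_ne hpow hne
  have hS0 : 0 ≤ S := by positivity
  -- S > 0 : otherwise ustar = 0 and SCNR = 0, contradicting hpos
  have hSpos : 0 < S := by
    rcases lt_or_eq_of_le hS0 with h' | h'
    · exact h'
    · exfalso
      have hz : ∀ k t, ustar k t = 0 := by
        intro k t
        have := (Finset.sum_eq_zero_iff_of_nonneg (fun k _ => by positivity)).mp h'.symm
          k (Finset.mem_univ k)
        have := (Finset.sum_eq_zero_iff_of_nonneg (fun t _ => by positivity)).mp this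
          t (Finset.mem_univ t)
        have hn : ‖ustar k t‖ = 0 := by
          have := this; nlinarith [norm_nonneg (ustar k t), sq_nonneg (‖ustar k t‖)]
        exact norm_eq_zero.mp hn
      have hu0 : ustar = fun _ _ => (0:ℂ) := by funext k t; exact hz k t
      have i0 : Fin I := ⟨0, hI⟩
      have hz0 : ((fun _ => (0:ℂ)) : Fin Nt → ℂ) = 0 := rfl
      have hSCNR0 : SCNR w A αT C αC σr i0 ustar = 0 := by
        rw [hu0]; unfold SCNR
        simp [hz0, Matrix.mulVec_zero]
      have hle := Finset.inf'_le (fun i => SCNR w A αT C αC σr i ustar)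
        (Finset.mem_univ i0)
      rw [hSCNR0] at hle
      exact absurd (lt_of_lt_of_le hpos hle) (lt_irrefl 0)
  set c := Real.sqrt (Pmax / S) with hc
  have hc2 : c ^ 2 = Pmax / S := Real.sq_sqrt (div_pos hP hSpos).le
  have hc1 : 1 < c ^ 2 := by rw [hc2]; rw [lt_div_iff₀ hSpos]; linarith
  have hcpos : 0 < c := Real.sqrt_pos.mpr (div_pos hP hSpos)
  set v : Fin K → Fin Nt → ℂ := fun k t => (c:ℂ) * ustar k t with hv
  -- power of v
  have hvpow : (∑ k, ∑ t, ‖v k t‖ ^ 2) = Pmax := by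
    have : ∀ k t, ‖v k t‖ ^ 2 = c ^ 2 * ‖ustar k t‖ ^ 2 := fun k t =>
      norm_scale_sq c hcpos.le _
    simp only [this, ← Finset.mul_sum]
    rw [← hS, hc2, div_mul_cancel₀ _ (ne_of_gt hSpos)]
  -- SINR of v
  have hvsinr : ∀ k, SINR h N₀ k v ≥ Γ k := by
    intro k
    have key : SINR h N₀ k v =
        c ^ 2 * ‖star (h k) ⬝ᵥ ustar k‖ ^ 2 /
          (c ^ 2 * (∑ i ∈ Finset.univ.erase k, ‖star (h k) ⬝ᵥ ustar i‖ ^ 2) + N₀) := by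
      unfold SINR
      have hdk : ∀ i, ‖star (h k) ⬝ᵥ v i‖ ^ 2 = c ^ 2 * ‖star (h k) ⬝ᵥ ustar i‖ ^ 2 := by
        intro i
        rw [hv, scale_dot, norm_scale_sq c hcpos.le]
      simp only [hdk, ← Finset.mul_sum]
    rw [key]
    calc Γ k ≤ SINR h N₀ k ustar := hsinr k
      _ ≤ _ := by
        unfold SINR
        exact frac_mono _ _ _ _ (by positivity)
          (Finset.sum_nonneg fun i _ => by positivity) hN₀ hc1.le
  have hvfeas : Feasible h N₀ Γ Pmax v := ⟨hvsinr, le_of_eq hvpow⟩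
  -- SCNR strictly increases
  have hne' : Finset.univ.Nonempty := Finset.univ_nonempty_iff.mpr (Fin.pos_iff_nonempty.mp hI)
  have hSCNRlt : ∀ i : Fin I, SCNR w A αT C αC σr i ustar < SCNR w A αT C αC σr i v := by
    intro i
    have hkey : SCNR w A αT C αC σr i v =
        c ^ 2 * (∑ k, ‖αT i‖ ^ 2 * ‖star w ⬝ᵥ (A i).mulVec (ustar k)‖ ^ 2) /
          (c ^ 2 * (∑ j, ∑ k, ‖αC j‖ ^ 2 * ‖star w ⬝ᵥ (C j).mulVec (ustar k)‖ ^ 2) + σr) := by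
      unfold SCNR
      have h1 : ∀ (M : Matrix (Fin Nr) (Fin Nt) ℂ) k,
          ‖star w ⬝ᵥ M.mulVec (v k)‖ ^ 2 = c ^ 2 * ‖star w ⬝ᵥ M.mulVec (ustar k)‖ ^ 2 := by
        intro M k
        rw [hv, scale_mulVec_dot, norm_scale_sq c hcpos.le]
      simp only [h1, Finset.mul_sum]
      congr 1
      · apply Finset.sum_congr rfl; intro k _; ring
      · congr 1
        apply Finset.sum_congr rfl; intro j _
        apply Finset.sum_congr rfl; intro k _; ring
    rw [hkey]
    have hnum : 0 < ∑ k, ‖αT i‖ ^ 2 * ‖star w ⬝ᵥ (A i).mulVec (ustar k)‖ ^ 2 := by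
      by_contra hn
      push_neg at hn
      have hnum0 : (∑ k, ‖αT i‖ ^ 2 * ‖star w ⬝ᵥ (A i).mulVec (ustar k)‖ ^ 2) = 0 :=
        le_antisymm hn (Finset.sum_nonneg fun k _ => by positivity)
      have hSCNR0 : SCNR w A αT C αC σr i ustar = 0 := by
        unfold SCNR; rw [hnum0, zero_div]
      have hle := Finset.inf'_le (fun j => SCNR w A αT C αC σr j ustar)
        (Finset.mem_univ i)
      rw [hSCNR0] at hle
      exact absurd (lt_of_lt_of_le hpos hle) (lt_irrefl 0)
    exact frac_strict _ _ _ _ hnum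
      (Finset.sum_nonneg fun j _ => Finset.sum_nonneg fun k _ => by positivity) hσr hc1
  -- contradiction with optimality
  obtain ⟨i0, _, hi0⟩ := Finset.exists_mem_eq_inf' hne'
    (fun i => SCNR w A αT C αC σr i v)
  have h1 : (Finset.univ.inf' hne' fun i => SCNR w A αT C αC σr i ustar)
      < (Finset.univ.inf' hne' fun i => SCNR w A αT C αC σr i v) := by
    rw [hi0]
    exact lt_of_le_of_lt (Finset.inf'_le _ (Finset.mem_univ i0)) (hSCNRlt i0)
  exact absurd (hopt v hvfeas) (not_le.mpr h1)
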